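/- arXiv:2306.09194 — 4 statements merged into one kernel-verified Lean document; each statement's English description precedes it below -/
import Mathlib

section
/- Let p ∈ (0,1) and let u be uniformly distributed on [0,1]. Define the score s(u) = ln(1/u) if u ≤ p, and s(u) = ln(1/(1−u)) if u > p. Then E[s(u)] = ∫₀^p ln(1/u) du + ∫_p^1 ln(1/(1−u)) du = 1 + ln(2)·H₂(p), where H₂(p) = −p log₂ p − (1−p) log₂(1−p) is the binary Shannon entropy of p. -/
open MeasureTheory

open intervalIntegral Set in
/-- `log` is interval integrable on `[0, p]` for `p ≤ 1`. -/
lemma intervalIntegrable_log_zero {p : ℝ} (hp0 : 0 ≤ p) (hp1 : p ≤ 1) :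
    IntervalIntegrable Real.log volume 0 p := by
  rw [intervalIntegrable_iff_integrableOn_Ioo_of_le hp0]
  have hmaj : IntegrableOn (fun x : ℝ => 2 * x ^ (-(1/2) : ℝ)) (Ioo 0 p) volume := by
    have := (intervalIntegrable_rpow' (a := 0) (b := p)
      (r := (-(1/2) : ℝ)) (by norm_num)).const_mul 2
    rwa [intervalIntegrable_iff_integrableOn_Ioo_of_le hp0] at this
  refine hmaj.mono' Real.measurable_log.aestronglyMeasurable ?_
  filter_upwards [ae_restrict_mem measurableSet_Ioo] with x hx
  have hx0 : 0 < x := hx.1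
  have hx1 : x ≤ 1 := hx.2.le.trans hp1
  have hlogle : Real.log x ≤ 0 := Real.log_nonpos hx0.le hx1
  rw [Real.norm_eq_abs, abs_of_nonpos hlogle]
  have h1 : Real.log (x ^ (-(1/2) : ℝ)) = -(1/2) * Real.log x := Real.log_rpow hx0 _
  have h2 : Real.log (x ^ (-(1/2) : ℝ)) ≤ x ^ (-(1/2) : ℝ) - 1 :=
    Real.log_le_sub_one_of_pos (Real.rpow_pos_of_pos hx0 _)
  nlinarith [Real.rpow_pos_of_pos hx0 (-(1/2) : ℝ)]

open intervalIntegral Set in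
/-- `∫ x in 0..p, log (1/x) = p - p * log p`. -/
lemma integral_log_one_div {p : ℝ} (hp0 : 0 ≤ p) (hp1 : p ≤ 1) :
    (∫ x in (0:ℝ)..p, Real.log (1 / x)) = p - p * Real.log p := by
  have hcongr : (fun x : ℝ => Real.log (1 / x)) = fun x : ℝ => -Real.log x := by
    funext x; rw [one_div, Real.log_inv]
  rw [hcongr]
  have hF : ∀ x ∈ Ioo (0:ℝ) p, HasDerivAt (fun x : ℝ => x - x * Real.log x)
      (-Real.log x) x := by
    intro x hx
    have h1 := (hasDerivAt_id x).sub (Real.hasDerivAt_mul_log hx.1.ne')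
    exact h1.congr_deriv (by ring)
  have hF' : ∀ x ∈ Ioo (0:ℝ) p, HasDerivWithinAt (fun x : ℝ => x - x * Real.log x)
      (-Real.log x) (Ioi x) x := fun x hx => (hF x hx).hasDerivWithinAt
  have hcont : ContinuousOn (fun x : ℝ => x - x * Real.log x) (Icc 0 p) :=
    (continuous_id.sub Real.continuous_mul_log).continuousOn
  have hint : IntervalIntegrable (fun x : ℝ => -Real.log x) volume 0 p :=
    (intervalIntegrable_log_zero hp0 hp1).neg
  have := intervalIntegral.integral_eq_sub_of_hasDeriv_right_of_le hp0 hcont hF' hint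
  rw [this]; simp

open Set in
/-- For `p ∈ (0,1)` and `u` uniform on `[0,1]`, the expected score
`s(u) = ln(1/u)` if `u ≤ p` and `ln(1/(1-u))` otherwise, satisfies
`E[s(u)] = ∫₀^p ln(1/u) du + ∫_p^1 ln(1/(1-u)) du = 1 + ln(2)·H₂(p)`. -/
theorem expected_watermarked_score
    {Ω : Type*} [MeasurableSpace Ω] (μ : Measure Ω) [IsProbabilityMeasure μ]
    (u : Ω → ℝ) (hu_meas : Measurable u)
    (hu : μ.map u = volume.restrict (Set.Icc (0 : ℝ) 1))
    (p : ℝ) (hp : p ∈ Set.Ioo (0 : ℝ) 1) :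
    (∫ ω, (if u ω ≤ p then Real.log (1 / u ω) else Real.log (1 / (1 - u ω))) ∂μ)
        = (∫ x in (0:ℝ)..p, Real.log (1 / x)) + (∫ x in p..(1:ℝ), Real.log (1 / (1 - x))) ∧
    (∫ ω, (if u ω ≤ p then Real.log (1 / u ω) else Real.log (1 / (1 - u ω))) ∂μ)
        = 1 + Real.log 2 * (-(p * Real.logb 2 p) - (1 - p) * Real.logb 2 (1 - p)) := by
  obtain ⟨hp0, hp1⟩ := hp
  set f : ℝ → ℝ := fun x => if x ≤ p then Real.log (1 / x) else Real.log (1 / (1 - x)) with hf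
  have hf_meas : Measurable f := by
    apply Measurable.ite (measurableSet_le measurable_id measurable_const)
    · exact Real.measurable_log.comp (measurable_const.div measurable_id)
    · exact Real.measurable_log.comp
        (measurable_const.div (measurable_const.sub measurable_id))
  -- first integral value
  have hI1 : (∫ x in (0:ℝ)..p, Real.log (1 / x)) = p - p * Real.log p :=
    integral_log_one_div hp0.le hp1.le
  -- second integral via substitution
  have hI2 : (∫ x in p..(1:ℝ), Real.log (1 / (1 - x)))
      = (1 - p) - (1 - p) * Real.log (1 - p) := by
    have := intervalIntegral.integral_comp_sub_left
      (a := p) (b := (1:ℝ)) (fun x => Real.log (1 / x)) 1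
    rw [this, sub_self]
    exact integral_log_one_div (by linarith) (by linarith)
  -- integrability of f on the two pieces
  have hint1 : IntervalIntegrable f volume 0 p := by
    apply ((intervalIntegrable_log_zero hp0.le hp1.le).neg).congr_ae
    rw [Filter.EventuallyEq, ae_restrict_iff' measurableSet_uIoc]
    filter_upwards with x hx
    rw [Set.uIoc_of_le hp0.le] at hx
    simp [hf, hx.2, one_div, Real.log_inv]
  have hlog1x : IntervalIntegrable (fun x => -Real.log (1 - x)) volume p 1 := by
    have h := (intervalIntegrable_log_zero (by linarith : (0:ℝ) ≤ 1 - p)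
      (by linarith)).comp_sub_left 1
    have h2 : IntervalIntegrable (fun x => Real.log (1 - x)) volume p 1 := by
      have e1 : (1:ℝ) - (1 - p) = p := by ring
      have e2 : (1:ℝ) - 0 = 1 := by ring
      rw [e1, e2] at h
      exact h.symm
    exact h2.neg
  have hint2 : IntervalIntegrable f volume p 1 := by
    apply hlog1x.congr_ae
    rw [Filter.EventuallyEq, ae_restrict_iff' measurableSet_uIoc]
    filter_upwards with x hx
    rw [Set.uIoc_of_le hp1.le] at hx
    simp [hf, not_le.mpr hx.1, one_div, Real.log_inv]
  -- main reduction to interval integral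
  have hmain : (∫ ω, f (u ω) ∂μ) = ∫ x in (0:ℝ)..(1:ℝ), f x := by
    have h1 : (∫ x, f x ∂(μ.map u)) = ∫ ω, f (u ω) ∂μ :=
      integral_map hu_meas.aemeasurable hf_meas.aestronglyMeasurable
    rw [← h1, hu, integral_Icc_eq_integral_Ioc,
      intervalIntegral.integral_of_le (by norm_num : (0:ℝ) ≤ 1)]
  have hsplit : (∫ x in (0:ℝ)..(1:ℝ), f x) = (∫ x in (0:ℝ)..p, f x) + ∫ x in p..(1:ℝ), f x :=
    (intervalIntegral.integral_add_adjacent_intervals hint1 hint2).symm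
  have hfp : (∫ x in (0:ℝ)..p, f x) = ∫ x in (0:ℝ)..p, Real.log (1 / x) := by
    apply intervalIntegral.integral_congr
    intro x hx
    rw [Set.uIcc_of_le hp0.le] at hx
    simp [hf, hx.2]
  have hfq : (∫ x in p..(1:ℝ), f x) = ∫ x in p..(1:ℝ), Real.log (1 / (1 - x)) := by
    rw [intervalIntegral.integral_of_le hp1.le, intervalIntegral.integral_of_le hp1.le]
    apply setIntegral_congr_ae measurableSet_Ioc
    filter_upwards with x hx
    simp [hf, not_le.mpr hx.1]
  have key : (∫ ω, f (u ω) ∂μ)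
      = (∫ x in (0:ℝ)..p, Real.log (1 / x)) + ∫ x in p..(1:ℝ), Real.log (1 / (1 - x)) := by
    rw [hmain, hsplit, hfp, hfq]
  constructor
  · exact key
  · rw [key, hI1, hI2]
    have hlog2 : Real.log 2 ≠ 0 := by
      have := Real.log_pos (by norm_num : (1:ℝ) < 2); linarith
    rw [Real.logb, Real.logb]
    field_simp
    ring
end

section
/- Let n ≥ 1 be an integer and let τ be a real number with 0 < τ ≤ n. Then (e^{√(τ/n)} / (1 + √(τ/n)))^{−n} ≤ (4/5)^{τ}. -/
/-- For an integer `n ≥ 1` and real `0 < τ ≤ n`: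
`(e^{√(τ/n)} / (1 + √(τ/n)))^{−n} ≤ (4/5)^{τ}`. -/
theorem tail_estimate_small_tau (n : ℕ) (hn : 1 ≤ n) (τ : ℝ) (hτ0 : 0 < τ)
    (hτ : τ ≤ (n : ℝ)) :
    (Real.exp (Real.sqrt (τ / n)) / (1 + Real.sqrt (τ / n))) ^ (-(n : ℝ))
      ≤ (4 / 5 : ℝ) ^ τ := by
  have hn0 : (0 : ℝ) < n := by exact_mod_cast hn
  set t : ℝ := τ / n with ht
  have ht0 : 0 < t := div_pos hτ0 hn0
  have ht1 : t ≤ 1 := (div_le_one hn0).2 hτ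
  set s : ℝ := Real.sqrt t with hs
  have hs0 : 0 ≤ s := Real.sqrt_nonneg t
  have hs1 : s ≤ 1 := by
    rw [hs, show (1:ℝ) = Real.sqrt 1 by simp]
    exact Real.sqrt_le_sqrt ht1
  have hsq : s ^ 2 = t := Real.sq_sqrt ht0.le
  have h1s : (0:ℝ) < 1 + s := by linarith
  -- key: 1 + t/4 ≤ exp s / (1 + s)
  have hexp : 1 + s + s ^ 2 / 2 ≤ Real.exp s := Real.quadratic_le_exp_of_nonneg hs0
  have hkey : 1 + t / 4 ≤ Real.exp s / (1 + s) := by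
    rw [le_div_iff₀ h1s]
    nlinarith [sq_nonneg s]
  -- Bernoulli-type: (5/4)^t ≤ 1 + t/4
  have hbern : (5 / 4 : ℝ) ^ t ≤ 1 + t / 4 := by
    have := Real.geom_mean_le_arith_mean2_weighted (by linarith : (0:ℝ) ≤ 1 - t)
      ht0.le (by norm_num : (0:ℝ) ≤ 1) (by norm_num : (0:ℝ) ≤ 5/4)
      (by ring : (1 - t) + t = 1)
    rw [Real.one_rpow, one_mul] at this
    linarith
  have ha1 : (1:ℝ) ≤ Real.exp s / (1 + s) :=
    le_trans (by linarith) hkey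
  have ha0 : (0:ℝ) < Real.exp s / (1 + s) := lt_of_lt_of_le one_pos ha1
  -- reduce to (5/4)^τ ≤ (exp s / (1+s))^n
  have hmain : (5 / 4 : ℝ) ^ τ ≤ (Real.exp s / (1 + s)) ^ (n : ℕ) := by
    have hτeq : τ = t * n := by rw [ht, div_mul_cancel₀ τ hn0.ne']
    calc (5 / 4 : ℝ) ^ τ = ((5 / 4 : ℝ) ^ t) ^ (n : ℕ) := by
          rw [hτeq, Real.rpow_mul (by norm_num), Real.rpow_natCast]
      _ ≤ (1 + t / 4) ^ (n : ℕ) :=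
          pow_le_pow_left₀ (Real.rpow_nonneg (by norm_num) t) hbern n
      _ ≤ (Real.exp s / (1 + s)) ^ (n : ℕ) :=
          pow_le_pow_left₀ (by linarith) hkey n
  have hlhs : (Real.exp s / (1 + s)) ^ (-(n : ℝ))
      = ((Real.exp s / (1 + s)) ^ (n : ℕ))⁻¹ := by
    rw [Real.rpow_neg ha0.le, Real.rpow_natCast]
  have hrhs : (4 / 5 : ℝ) ^ τ = ((5 / 4 : ℝ) ^ τ)⁻¹ := by
    rw [show (4/5 : ℝ) = (5/4 : ℝ)⁻¹ by norm_num, Real.inv_rpow (by norm_num)]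
  rw [hlhs, hrhs]
  exact inv_anti₀ (Real.rpow_pos_of_pos (by norm_num) τ) hmain
end

section
/- Let L ≥ 1 be an integer, let λ > 0 be real, and let E₁, …, E_L be i.i.d. exponential random variables with rate 1. Then the probability that there exists an index i ∈ {0, 1, …, L−1} with ∑_{j=i+1}^{L} E_j > (L−i) + λ·√(L−i) is at most L·(4/5)^λ. -/
open MeasureTheory ProbabilityTheory

open Set in
lemma exp_tail_lintegral {Ω : Type*} [MeasurableSpace Ω] {μ : Measure Ω} [IsProbabilityMeasure μ]
    {X : Ω → ℝ} (hm : Measurable X)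
    (hX : ∀ t : ℝ, 0 ≤ t → μ {ω | X ω > t} = ENNReal.ofReal (Real.exp (-t)))
    {t : ℝ} (ht0 : 0 < t) (ht1 : t < 1) :
    ∫⁻ ω, ENNReal.ofReal (Real.exp (t * X ω)) ∂μ = ENNReal.ofReal ((1 - t)⁻¹) := by
  have h0 : μ {ω | 0 < X ω} = 1 := by
    have h := hX 0 le_rfl
    simp only [neg_zero, Real.exp_zero, ENNReal.ofReal_one] at h
    exact h
  have h1 : ∫⁻ ω, ENNReal.ofReal (Real.exp (t * X ω)) ∂μ
      = ∫⁻ s in Ioi (0:ℝ), μ {ω | s < Real.exp (t * X ω)} :=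
    lintegral_eq_lintegral_meas_lt μ (Filter.Eventually.of_forall fun ω => (Real.exp_pos _).le)
      ((hm.const_mul t).exp.aemeasurable)
  rw [h1, ← Ioc_union_Ioi_eq_Ioi (zero_le_one (α := ℝ)),
    lintegral_union measurableSet_Ioi Ioc_disjoint_Ioi_same]
  have part1 : ∫⁻ s in Ioc (0:ℝ) 1, μ {ω | s < Real.exp (t * X ω)} = 1 := by
    rw [setLIntegral_congr_fun (g := fun _ => 1) measurableSet_Ioc
      (fun s hs => ?_)]
    · simp [Real.volume_Ioc]
    · refine le_antisymm prob_le_one ?_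
      rw [← h0]
      refine measure_mono fun ω hω => ?_
      have hlt : (1:ℝ) < Real.exp (t * X ω) := by
        rw [← Real.exp_zero]
        exact Real.exp_lt_exp.2 (mul_pos ht0 hω)
      exact lt_of_le_of_lt hs.2 hlt
  have part2 : ∫⁻ s in Ioi (1:ℝ), μ {ω | s < Real.exp (t * X ω)}
      = ENNReal.ofReal (-1 / (-t⁻¹ + 1)) := by
    have hlt : -t⁻¹ < -1 := by
      have h := one_lt_inv₀ ht0 |>.2 ht1
      linarith
    rw [setLIntegral_congr_fun (g := fun s => ENNReal.ofReal (s ^ (-t⁻¹))) measurableSet_Ioi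
      (fun s hs => ?_)]
    · rw [← ofReal_integral_eq_lintegral_ofReal
        (integrableOn_Ioi_rpow_of_lt hlt one_pos)
        ((ae_restrict_iff' measurableSet_Ioi).2 (ae_of_all _
          (fun s hs => Real.rpow_nonneg (le_of_lt (lt_trans one_pos hs)) _)))]
      rw [integral_Ioi_rpow_of_lt hlt one_pos, Real.one_rpow]
    · have hs1 : (1:ℝ) < s := hs
      have hs0 : (0:ℝ) < s := lt_trans one_pos hs1
      have hset : {ω | s < Real.exp (t * X ω)} = {ω | X ω > Real.log s / t} := by
        ext ω
        simp only [Set.mem_setOf_eq, gt_iff_lt]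
        rw [← Real.log_lt_iff_lt_exp hs0, div_lt_iff₀ ht0]
        constructor <;> intro h <;> linarith
      rw [hset, hX _ (div_nonneg (Real.log_nonneg hs1.le) ht0.le)]
      congr 1
      rw [Real.rpow_def_of_pos hs0]
      congr 1
      field_simp
  rw [part1, part2]
  rw [← ENNReal.ofReal_one, ← ENNReal.ofReal_add zero_le_one]
  · congr 1
    have ht1' : (1:ℝ) - t ≠ 0 := by intro h; linarith
    have htne : t ≠ 0 := ne_of_gt ht0
    have hne2 : (-1:ℝ) + t ≠ 0 := by intro h; linarith
    have hinv : -t⁻¹ + 1 = (t - 1) / t := by field_simp; ring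
    rw [hinv, div_div_eq_mul_div, neg_one_mul, neg_div, ← div_neg, neg_sub]
    rw [eq_comm, inv_eq_iff_eq_inv, eq_comm]
    field_simp
    ring
  · have hneg : -t⁻¹ + 1 ≤ 0 := by
      have := one_lt_inv₀ ht0 |>.2 ht1
      linarith
    exact div_nonneg_iff.mpr (Or.inr ⟨by norm_num, hneg⟩)

section helpers
variable {Ω : Type*} [MeasurableSpace Ω] {μ : Measure Ω} [IsProbabilityMeasure μ]
  {X : Ω → ℝ}

lemma exp_tail_integrable (hm : Measurable X)
    (hX : ∀ t : ℝ, 0 ≤ t → μ {ω | X ω > t} = ENNReal.ofReal (Real.exp (-t)))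
    {t : ℝ} (ht0 : 0 < t) (ht1 : t < 1) :
    Integrable (fun ω => Real.exp (t * X ω)) μ := by
  refine ⟨((hm.const_mul t).exp).aestronglyMeasurable, ?_⟩
  rw [hasFiniteIntegral_iff_ofReal (ae_of_all _ fun ω => (Real.exp_pos _).le),
    exp_tail_lintegral hm hX ht0 ht1]
  exact ENNReal.ofReal_lt_top

lemma exp_tail_mgf (hm : Measurable X)
    (hX : ∀ t : ℝ, 0 ≤ t → μ {ω | X ω > t} = ENNReal.ofReal (Real.exp (-t)))
    {t : ℝ} (ht0 : 0 < t) (ht1 : t < 1) :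
    mgf X μ t = (1 - t)⁻¹ := by
  rw [mgf, integral_eq_lintegral_of_nonneg_ae (ae_of_all _ fun ω => (Real.exp_pos _).le)
    ((hm.const_mul t).exp).aestronglyMeasurable, exp_tail_lintegral hm hX ht0 ht1,
    ENNReal.toReal_ofReal (inv_nonneg.2 (by linarith))]

end helpers

lemma key_ineq (n : ℕ) (hn : 1 ≤ n) (lam : ℝ) (hlam : 2 ≤ lam) :
    Real.exp (-(lam / (lam + 2 * Real.sqrt n)) * ((n:ℝ) + lam * Real.sqrt n)) *
      ((1 - lam / (lam + 2 * Real.sqrt n))⁻¹) ^ n ≤ (4/5 : ℝ) ^ lam := by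
  have hsq1 : 1 ≤ Real.sqrt n := Real.one_le_sqrt.2 (by exact_mod_cast hn)
  set sq := Real.sqrt n with hsqdef
  have hsqn : sq ^ 2 = (n:ℝ) := Real.sq_sqrt (by positivity)
  have hd : 0 < lam + 2 * sq := by linarith
  set t := lam / (lam + 2 * sq) with htdef
  have ht0 : 0 < t := div_pos (by linarith) hd
  have ht1 : t < 1 := (div_lt_one hd).2 (by linarith)
  have h1t : 0 < 1 - t := by linarith
  have hpow : ((1 - t)⁻¹) ^ n = Real.exp ((n:ℝ) * Real.log (1 - t)⁻¹) := by
    rw [← Real.exp_log (pow_pos (inv_pos.2 h1t) n), Real.log_pow]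
  rw [hpow, ← Real.exp_add, Real.rpow_def_of_pos (by norm_num : (0:ℝ) < 4/5), Real.exp_le_exp]
  have hlog1 : Real.log (1 - t)⁻¹ ≤ t / (1 - t) := by
    have h := Real.log_le_sub_one_of_pos (inv_pos.2 h1t)
    have h2 : (1 - t)⁻¹ - 1 = t / (1 - t) := by field_simp; ring
    linarith
  have hlog2 : -(1/4 : ℝ) ≤ Real.log (4/5) := by
    have h := Real.log_le_sub_one_of_pos (show (0:ℝ) < 5/4 by norm_num)
    have h2 : Real.log (5/4) = - Real.log (4/5) := by
      rw [← Real.log_inv]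
      norm_num
    linarith
  have ht1t : t / (1 - t) = lam / (2 * sq) := by
    have h1t_eq : 1 - t = 2 * sq / (lam + 2 * sq) := by
      rw [htdef]
      field_simp
      ring
    rw [htdef, h1t_eq]
    have hsqne : (2 * sq) ≠ 0 := by positivity
    have hne : lam + 2 * sq ≠ 0 := ne_of_gt hd
    field_simp
  have hsq0 : (0:ℝ) < sq := by linarith
  have hne : lam + 2 * sq ≠ 0 := ne_of_gt hd
  have hsqne : sq ≠ 0 := ne_of_gt hsq0
  have harith : -t * ((n:ℝ) + lam * sq) + (n:ℝ) * (t / (1 - t)) ≤ lam * (-(1/4)) := by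
    rw [ht1t, htdef, ← hsqn, ← sub_nonneg]
    have hid : lam * -(1/4) - (-(lam/(lam+2*sq))*(sq^2+lam*sq) + sq^2*(lam/(2*sq)))
        = (4*lam^2*sq^2 - 2*lam^2*sq - 4*lam*sq^2) / ((lam+2*sq)*(2*sq)*4) := by
      field_simp
      ring
    rw [hid]
    apply div_nonneg _ (by positivity)
    nlinarith [mul_nonneg (by linarith : (0:ℝ) ≤ lam) (by linarith : (0:ℝ) ≤ sq - 1),
      mul_nonneg (by linarith : (0:ℝ) ≤ sq) (by linarith : (0:ℝ) ≤ lam - 2),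
      mul_pos (mul_pos (by linarith : (0:ℝ) < lam) hsq0) hsq0,
      mul_nonneg (mul_nonneg (by linarith : (0:ℝ) ≤ 2*lam) hsq0.le)
        (by nlinarith [mul_nonneg (by linarith : (0:ℝ) ≤ lam) (by linarith : (0:ℝ) ≤ sq - 1),
            mul_nonneg (by linarith : (0:ℝ) ≤ sq) (by linarith : (0:ℝ) ≤ lam - 2)] :
          (0:ℝ) ≤ 2*lam*sq - lam - 2*sq)]
  calc -t * ((n:ℝ) + lam * sq) + (n:ℝ) * Real.log (1 - t)⁻¹
      ≤ -t * ((n:ℝ) + lam * sq) + (n:ℝ) * (t / (1 - t)) := by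
        have hn0 : (0:ℝ) ≤ n := by positivity
        nlinarith [hlog1]
    _ ≤ lam * (-(1/4)) := harith
    _ ≤ Real.log (4/5) * lam := by nlinarith [hlog2]

lemma chernoff_sum {Ω : Type*} [MeasurableSpace Ω] (μ : Measure Ω) [IsProbabilityMeasure μ]
    {L : ℕ} (E : Fin L → Ω → ℝ) (hmeas : ∀ j, Measurable (E j))
    (hindep : iIndepFun E μ)
    (hexp : ∀ j, ∀ t : ℝ, 0 ≤ t → μ {ω | E j ω > t} = ENNReal.ofReal (Real.exp (-t)))
    (s : Finset (Fin L)) (hs : 1 ≤ s.card) {lam : ℝ} (hlam : 2 ≤ lam) :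
    μ {ω | (∑ j ∈ s, E j ω) > ((s.card : ℝ) + lam * Real.sqrt (s.card : ℝ))}
      ≤ ENNReal.ofReal ((4/5 : ℝ) ^ lam) := by
  set n := s.card with hn
  have hsq1 : 1 ≤ Real.sqrt n := Real.one_le_sqrt.2 (by exact_mod_cast hs)
  set t := lam / (lam + 2 * Real.sqrt n) with htdef
  have hd : 0 < lam + 2 * Real.sqrt n := by linarith
  have ht0 : 0 < t := div_pos (by linarith) hd
  have ht1 : t < 1 := (div_lt_one hd).2 (by linarith)
  have hint : ∀ j ∈ s, Integrable (fun ω => Real.exp (t * E j ω)) μ := fun j _ =>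
    exp_tail_integrable (hmeas j) (hexp j) ht0 ht1
  have hintS : Integrable (fun ω => Real.exp (t * (∑ j ∈ s, E j) ω)) μ :=
    hindep.integrable_exp_mul_sum hmeas hint
  have hmgf : mgf (∑ j ∈ s, E j) μ t = ((1 - t)⁻¹) ^ n := by
    rw [hindep.mgf_sum hmeas s,
      Finset.prod_congr rfl (fun j _ => exp_tail_mgf (hmeas j) (hexp j) ht0 ht1),
      Finset.prod_const]
  have hcher := measure_ge_le_exp_mul_mgf (X := ∑ j ∈ s, E j) (μ := μ)
    ((n : ℝ) + lam * Real.sqrt n) ht0.le hintS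
  rw [hmgf] at hcher
  calc μ {ω | (∑ j ∈ s, E j ω) > ((n : ℝ) + lam * Real.sqrt (n : ℝ))}
      ≤ μ {ω | ((n : ℝ) + lam * Real.sqrt (n : ℝ)) ≤ (∑ j ∈ s, E j) ω} := by
        refine measure_mono fun ω hω => ?_
        have : ((n:ℝ) + lam * Real.sqrt n) < ∑ j ∈ s, E j ω := hω
        simpa [Finset.sum_apply] using this.le
    _ = ENNReal.ofReal ((μ {ω | ((n : ℝ) + lam * Real.sqrt (n : ℝ)) ≤ (∑ j ∈ s, E j) ω}).toReal) :=
        (ENNReal.ofReal_toReal (measure_ne_top _ _)).symm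
    _ ≤ ENNReal.ofReal (Real.exp (-t * ((n:ℝ) + lam * Real.sqrt n)) * ((1 - t)⁻¹) ^ n) :=
        ENNReal.ofReal_le_ofReal hcher
    _ ≤ ENNReal.ofReal ((4/5 : ℝ) ^ lam) :=
        ENNReal.ofReal_le_ofReal (by simpa using key_ineq n hs lam hlam)

/-- Soundness core: for i.i.d. rate-1 exponentials `E₁, …, E_L` (indexed here by
`Fin L`, where `E j` is `E_{j+1}`), the probability that some index
`i ∈ {0, …, L−1}` has `∑_{j=i+1}^{L} E_j > (L−i) + λ·√(L−i)` is at most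
`L·(4/5)^λ`. -/
theorem detector_union_bound
    {Ω : Type*} [MeasurableSpace Ω] (μ : Measure Ω) [IsProbabilityMeasure μ]
    (L : ℕ) (hL : 1 ≤ L) (lam : ℝ) (hlam : 0 < lam)
    (E : Fin L → Ω → ℝ) (hmeas : ∀ j, Measurable (E j))
    (hindep : iIndepFun E μ)
    (hexp : ∀ j, ∀ t : ℝ, 0 ≤ t → μ {ω | E j ω > t} = ENNReal.ofReal (Real.exp (-t))) :
    μ {ω | ∃ i < L,
        (∑ j ∈ Finset.univ.filter (fun j : Fin L => i ≤ (j : ℕ)), E j ω)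
          > ((L : ℝ) - i) + lam * Real.sqrt ((L : ℝ) - i)}
      ≤ ENNReal.ofReal ((L : ℝ) * (4 / 5 : ℝ) ^ lam) := by
  by_cases hlam2 : 2 ≤ lam
  · -- union bound + Chernoff
    have hA : ∀ i, i < L → μ {ω |
        (∑ j ∈ Finset.univ.filter (fun j : Fin L => i ≤ (j : ℕ)), E j ω)
          > ((L : ℝ) - i) + lam * Real.sqrt ((L : ℝ) - i)} ≤ ENNReal.ofReal ((4/5 : ℝ) ^ lam) := by
      intro i hi
      have hcard : (Finset.univ.filter (fun j : Fin L => i ≤ (j : ℕ))).card = L - i := by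
        have hIci : Finset.univ.filter (fun j : Fin L => i ≤ (j : ℕ)) = Finset.Ici (⟨i, hi⟩ : Fin L) := by
          ext j
          simp [Fin.le_def]
        rw [hIci, Fin.card_Ici]
      have hLi : ((L : ℝ) - i) = ((L - i : ℕ) : ℝ) := by
        rw [Nat.cast_sub hi.le]
      have h := chernoff_sum μ E hmeas hindep hexp
        (Finset.univ.filter (fun j : Fin L => i ≤ (j : ℕ))) (by rw [hcard]; omega) hlam2
      rw [hcard] at h
      rw [hLi]
      exact h
    have hset : {ω | ∃ i < L,
        (∑ j ∈ Finset.univ.filter (fun j : Fin L => i ≤ (j : ℕ)), E j ω)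
          > ((L : ℝ) - i) + lam * Real.sqrt ((L : ℝ) - i)}
        = ⋃ i ∈ Finset.range L, {ω |
        (∑ j ∈ Finset.univ.filter (fun j : Fin L => i ≤ (j : ℕ)), E j ω)
          > ((L : ℝ) - i) + lam * Real.sqrt ((L : ℝ) - i)} := by
      ext ω
      simp [Finset.mem_range]
    calc μ _ ≤ ∑ i ∈ Finset.range L, μ {ω |
        (∑ j ∈ Finset.univ.filter (fun j : Fin L => i ≤ (j : ℕ)), E j ω)
          > ((L : ℝ) - i) + lam * Real.sqrt ((L : ℝ) - i)} := by
          rw [hset]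
          exact measure_biUnion_finset_le _ _
      _ ≤ ∑ i ∈ Finset.range L, ENNReal.ofReal ((4/5 : ℝ) ^ lam) :=
          Finset.sum_le_sum fun i hi => hA i (Finset.mem_range.1 hi)
      _ = L * ENNReal.ofReal ((4/5 : ℝ) ^ lam) := by
          rw [Finset.sum_const, Finset.card_range, nsmul_eq_mul]
      _ = ENNReal.ofReal ((L : ℝ) * (4/5 : ℝ) ^ lam) := by
          rw [ENNReal.ofReal_mul (by positivity), ENNReal.ofReal_natCast]
  · -- lam < 2
    push_neg at hlam2
    rcases Nat.lt_or_ge L 2 with hL2 | hL2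
    · -- L = 1
      have hL1 : L = 1 := by omega
      subst hL1
      have hset : {ω | ∃ i < 1,
          (∑ j ∈ Finset.univ.filter (fun j : Fin 1 => i ≤ (j : ℕ)), E j ω)
            > ((1 : ℕ) : ℝ) - i + lam * Real.sqrt (((1 : ℕ) : ℝ) - i)}
          = {ω | E 0 ω > 1 + lam} := by
        ext ω
        constructor
        · rintro ⟨i, hi, h⟩
          interval_cases i
          simp at h
          convert h using 1 <;> simp
        · intro h
          refine ⟨0, one_pos, ?_⟩
          simpa using h
      rw [hset, hexp 0 (1 + lam) (by linarith)]
      apply ENNReal.ofReal_le_ofReal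
      have hlog2 : -(1/4 : ℝ) ≤ Real.log (4/5) := by
        have h := Real.log_le_sub_one_of_pos (show (0:ℝ) < 5/4 by norm_num)
        have h2 : Real.log (5/4) = - Real.log (4/5) := by
          rw [← Real.log_inv]; norm_num
        linarith
      rw [Real.rpow_def_of_pos (by norm_num : (0:ℝ) < 4/5)]
      have : Real.exp (-(1 + lam)) ≤ Real.exp (Real.log (4/5) * lam) := by
        rw [Real.exp_le_exp]
        nlinarith
      simpa using this
    · -- L ≥ 2 : trivial bound
      have h1 : (1 : ℝ) ≤ (L : ℝ) * (4/5 : ℝ) ^ lam := by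
        have hbase : (4/5 : ℝ) ^ lam ≥ (4/5 : ℝ) ^ (2 : ℝ) :=
          Real.rpow_le_rpow_of_exponent_ge (by norm_num) (by norm_num) hlam2.le
        have h2 : (4/5 : ℝ) ^ (2 : ℝ) = 16/25 := by
          rw [show (2:ℝ) = ((2:ℕ):ℝ) by norm_num, Real.rpow_natCast]
          norm_num
        have hLr : (2 : ℝ) ≤ (L : ℝ) := by exact_mod_cast hL2
        nlinarith [Real.rpow_nonneg (show (0:ℝ) ≤ 4/5 by norm_num) lam]
      calc μ _ ≤ 1 := prob_le_one
        _ = ENNReal.ofReal 1 := ENNReal.ofReal_one.symm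
        _ ≤ ENNReal.ofReal ((L : ℝ) * (4/5 : ℝ) ^ lam) := ENNReal.ofReal_le_ofReal h1
end

section
/- Let L ≥ 1 and let D be a probability distribution on {0,1}^L. Let U₁, …, U_L be i.i.d. uniform random variables on [0,1], and define the random string X = (X₁, …, X_L) sequentially by X_j = 1 if U_j ≤ q_j and X_j = 0 otherwise, where q_j = Pr_{Y∼D}[Y_j = 1 | Y_1 = X_1, …, Y_{j−1} = X_{j−1}] is the conditional probability under D of the j-th bit being 1 given the previously generated bits (whenever the conditioning event has positive probability). Define the score s(1,u) = ln(1/u) and s(0,u) = ln(1/(1−u)). Then X is distributed according to D, and E[∑_{j=1}^{L} s(X_j, U_j)] = L + ln(2)·H(D), where H(D) = ∑_{y ∈ {0,1}^L} −D(y) log₂ D(y) is the Shannon entropy of D (with the convention 0·log₂ 0 = 0). -/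
open MeasureTheory ProbabilityTheory

/-- The conditional probability `q_j`, under a distribution `D` on `{0,1}^L`, that
the `j`-th bit equals `1` (encoded as `true`) given that the bits at indices `< j`
agree with `prev` (with value `0` when the conditioning event has probability
zero, via Lean's convention `0/0 = 0`). -/
noncomputable def condProb {L : ℕ} (D : PMF (Fin L → Bool)) (j : Fin L)
    (prev : Fin L → Bool) : ℝ :=
  (∑ y : Fin L → Bool,
      if (∀ i : Fin L, (i : ℕ) < (j : ℕ) → y i = prev i) ∧ y j = true
      then (D y).toReal else 0) /
  (∑ y : Fin L → Bool,
      if (∀ i : Fin L, (i : ℕ) < (j : ℕ) → y i = prev i)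
      then (D y).toReal else 0)

open scoped Classical in
/-- Sequential generation of the watermarked string: given realized uniforms `u`,
`genAux D u k` fixes the first `k` bits (and is `false` beyond them), setting bit
`j` to `1` iff `u j ≤ q_j` where `q_j` is the conditional probability of the
`j`-th bit being `1` given the previously generated bits. -/
noncomputable def genAux {L : ℕ} (D : PMF (Fin L → Bool)) (u : Fin L → ℝ) :
    ℕ → (Fin L → Bool)
  | 0 => fun _ => false
  | (k + 1) => fun i =>
      if (i : ℕ) = k then
        if u i ≤ condProb D i (genAux D u k) then true else false
      else genAux D u k i

namespace Watermark

open Real Set MeasureTheory.Measure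

variable {L : ℕ} (D : PMF (Fin L → Bool))

noncomputable def Npre (k : ℕ) (y : Fin L → Bool) : ℝ :=
  ∑ z : Fin L → Bool, if (∀ i : Fin L, (i : ℕ) < k → z i = y i) then (D z).toReal else 0

noncomputable def NpreT (j : Fin L) (y : Fin L → Bool) : ℝ :=
  ∑ z : Fin L → Bool,
    if (∀ i : Fin L, (i : ℕ) < (j : ℕ) → z i = y i) ∧ z j = true then (D z).toReal else 0

lemma condProb_eq (j : Fin L) (y : Fin L → Bool) :
    condProb D j y = NpreT D j y / Npre D (j : ℕ) y := rfl

lemma Npre_nonneg (k : ℕ) (y : Fin L → Bool) : 0 ≤ Npre D k y :=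
  Finset.sum_nonneg fun z _ => by positivity

lemma NpreT_nonneg (j : Fin L) (y : Fin L → Bool) : 0 ≤ NpreT D j y :=
  Finset.sum_nonneg fun z _ => by positivity

lemma NpreT_le_Npre (j : Fin L) (y : Fin L → Bool) : NpreT D j y ≤ Npre D (j : ℕ) y := by
  apply Finset.sum_le_sum
  intro z _
  by_cases h : (∀ i : Fin L, (i : ℕ) < (j : ℕ) → z i = y i) ∧ z j = true
  · rw [if_pos h, if_pos h.1]
  · rw [if_neg h]; positivity

lemma condProb_nonneg (j : Fin L) (y : Fin L → Bool) : 0 ≤ condProb D j y :=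
  div_nonneg (NpreT_nonneg D j y) (Npre_nonneg D _ y)

lemma condProb_le_one (j : Fin L) (y : Fin L → Bool) : condProb D j y ≤ 1 := by
  rw [condProb_eq]
  rcases eq_or_lt_of_le (Npre_nonneg D (j : ℕ) y) with h | h
  · rw [← h, div_zero]; exact zero_le_one
  · exact (div_le_one h).2 (NpreT_le_Npre D j y)

lemma condProb_congr (j : Fin L) {p p' : Fin L → Bool}
    (h : ∀ i : Fin L, (i : ℕ) < (j : ℕ) → p i = p' i) :
    condProb D j p = condProb D j p' := by
  have hc : ∀ z : Fin L → Bool,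
      (∀ i : Fin L, (i : ℕ) < (j : ℕ) → z i = p i) ↔
      (∀ i : Fin L, (i : ℕ) < (j : ℕ) → z i = p' i) :=
    fun z => forall_congr' fun i => imp_congr_right fun hi => by rw [h i hi]
  unfold condProb
  congr 1
  · exact Finset.sum_congr rfl fun z _ => by
      exact if_congr (and_congr_left fun _ => hc z) rfl rfl
  · exact Finset.sum_congr rfl fun z _ => by
      exact if_congr (hc z) rfl rfl

lemma sum_toReal_eq_one : ∑ z : Fin L → Bool, ((D z).toReal) = 1 := by
  have h1 : ∑' z : Fin L → Bool, D z = 1 := D.tsum_coe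
  rw [tsum_fintype] at h1
  rw [← ENNReal.toReal_sum (fun z _ => D.apply_ne_top z) , h1, ENNReal.toReal_one]

lemma Npre_zero (y : Fin L → Bool) : Npre D 0 y = 1 := by
  have : ∀ z : Fin L → Bool, (∀ i : Fin L, (i : ℕ) < 0 → z i = y i) := by
    intro z i hi; exact absurd hi (Nat.not_lt_zero _)
  unfold Npre
  rw [Finset.sum_congr rfl fun z _ => if_pos (this z)]
  exact sum_toReal_eq_one D

lemma Npre_L (y : Fin L → Bool) : Npre D L y = (D y).toReal := by
  have hc : ∀ z : Fin L → Bool, (∀ i : Fin L, (i : ℕ) < L → z i = y i) ↔ z = y :=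
    fun z => ⟨fun h => funext fun i => h i i.isLt, fun h i _ => by rw [h]⟩
  unfold Npre
  rw [Finset.sum_congr rfl fun z _ => if_congr (hc z) rfl rfl]
  simp [Finset.sum_ite_eq' Finset.univ y (fun z => (D z).toReal)]


noncomputable def mBit (y : Fin L → Bool) (j : Fin L) : ℝ :=
  if y j then condProb D j y else 1 - condProb D j y

lemma mBit_nonneg (y : Fin L → Bool) (j : Fin L) : 0 ≤ mBit D y j := by
  unfold mBit
  split
  · exact condProb_nonneg D j y
  · linarith [condProb_le_one D j y]

lemma succ_cond_iff (j : Fin L) (y z : Fin L → Bool) :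
    (∀ i : Fin L, (i : ℕ) < (j : ℕ) + 1 → z i = y i) ↔
    (∀ i : Fin L, (i : ℕ) < (j : ℕ) → z i = y i) ∧ z j = y j := by
  constructor
  · exact fun h => ⟨fun i hi => h i (Nat.lt_succ_of_lt hi), h j (Nat.lt_succ_self _)⟩
  · rintro ⟨h1, h2⟩ i hi
    rcases Nat.lt_succ_iff_lt_or_eq.1 hi with hi' | hi'
    · exact h1 i hi'
    · have : i = j := Fin.ext hi'
      rwa [this]

lemma Npre_succ (j : Fin L) (y : Fin L → Bool) :
    Npre D ((j : ℕ) + 1) y = mBit D y j * Npre D (j : ℕ) y := by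
  have hrw : Npre D ((j : ℕ) + 1) y = ∑ z : Fin L → Bool,
      if (∀ i : Fin L, (i : ℕ) < (j : ℕ) → z i = y i) ∧ z j = y j then (D z).toReal else 0 :=
    Finset.sum_congr rfl fun z _ => if_congr (succ_cond_iff j y z) rfl rfl
  by_cases hy : y j = true
  · have hT : Npre D ((j : ℕ) + 1) y = NpreT D j y := by
      rw [hrw]; unfold NpreT
      exact Finset.sum_congr rfl fun z _ => by rw [hy]
    rw [hT]
    unfold mBit
    rw [if_pos hy, condProb_eq]
    rcases eq_or_lt_of_le (Npre_nonneg D (j : ℕ) y) with h | h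
    · have hT0 : NpreT D j y = 0 :=
        le_antisymm (by rw [h]; exact NpreT_le_Npre D j y) (NpreT_nonneg D j y)
      rw [← h, hT0]; simp
    · field_simp
  · have hy' : y j = false := by simpa using hy
    have hsplit : Npre D (j : ℕ) y = NpreT D j y + Npre D ((j : ℕ) + 1) y := by
      rw [hrw]
      unfold Npre NpreT
      rw [← Finset.sum_add_distrib]
      refine Finset.sum_congr rfl fun z _ => ?_
      by_cases ha : (∀ i : Fin L, (i : ℕ) < (j : ℕ) → z i = y i)
      · cases hz : z j
        · rw [if_pos ha, if_neg (by simp), if_pos ⟨ha, by rw [hy']⟩]; ring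
        · rw [if_pos ha, if_pos ⟨ha, rfl⟩, if_neg (by simp [hy'])]; ring
      · rw [if_neg ha, if_neg (by tauto), if_neg (by tauto)]; ring
    unfold mBit
    rw [if_neg (by simp [hy']), condProb_eq]
    rcases eq_or_lt_of_le (Npre_nonneg D (j : ℕ) y) with h | h
    · have h2 : Npre D ((j : ℕ) + 1) y = 0 := by
        have := NpreT_nonneg D j y
        have h3 := Npre_nonneg D ((j : ℕ) + 1) y
        nlinarith [hsplit, h.symm]
      rw [h2, ← h]; ring
    · field_simp
      linarith [hsplit]

lemma prod_mBit (y : Fin L → Bool) : ∏ j : Fin L, mBit D y j = (D y).toReal := by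
  have key : ∀ k : ℕ, k ≤ L →
      ∏ j ∈ Finset.univ.filter (fun j : Fin L => (j : ℕ) < k), mBit D y j = Npre D k y := by
    intro k
    induction k with
    | zero =>
      intro _
      rw [Npre_zero]
      convert Finset.prod_empty
      ext j; simp
    | succ k ih =>
      intro hk
      have hkL : k < L := hk
      have hfil : Finset.univ.filter (fun j : Fin L => (j : ℕ) < k + 1) =
          insert ⟨k, hkL⟩ (Finset.univ.filter (fun j : Fin L => (j : ℕ) < k)) := by
        ext j
        simp [Nat.lt_succ_iff_lt_or_eq, Fin.ext_iff]
        omega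
      rw [hfil, Finset.prod_insert (by simp), ih (le_of_lt hkL)]
      exact (Npre_succ D ⟨k, hkL⟩ y).symm
  have h := key L le_rfl
  rwa [Finset.filter_true_of_mem (fun j _ => j.isLt), Npre_L] at h

noncomputable def Iset (y : Fin L → Bool) (j : Fin L) : Set ℝ :=
  if y j then Set.Iic (condProb D j y) else Set.Ioi (condProb D j y)

lemma genAux_stable (u : Fin L → ℝ) :
    ∀ m k : ℕ, k ≤ m → ∀ i : Fin L, (i : ℕ) < k → genAux D u m i = genAux D u k i := by
  intro m
  induction m with
  | zero => intro k hk i hi; interval_cases k; rfl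
  | succ m ih =>
    intro k hk i hi
    rcases Nat.lt_succ_iff_lt_or_eq.1 (Nat.lt_succ_of_le hk) with hk' | hk'
    · have hne : (i : ℕ) ≠ m := Nat.ne_of_lt (lt_of_lt_of_le hi (Nat.le_of_lt_succ hk'))
      show (if (i : ℕ) = m then _ else genAux D u m i) = _
      rw [if_neg hne]
      exact ih k (Nat.le_of_lt_succ hk') i hi
    · rw [hk']

lemma gen_apply (u : Fin L → ℝ) (j : Fin L) :
    genAux D u L j = if u j ≤ condProb D j (genAux D u L) then true else false := by
  have h1 : genAux D u L j = genAux D u ((j : ℕ) + 1) j :=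
    genAux_stable D u L ((j : ℕ) + 1) j.isLt j (Nat.lt_succ_self _)
  rw [h1]
  show (if (j : ℕ) = (j : ℕ) then
      (if u j ≤ condProb D j (genAux D u (j : ℕ)) then true else false) else _) = _
  rw [if_pos rfl]
  have h2 : condProb D j (genAux D u (j : ℕ)) = condProb D j (genAux D u L) :=
    condProb_congr D j fun i hi =>
      (genAux_stable D u L (j : ℕ) (le_of_lt j.isLt) i hi).symm
  rw [h2]

lemma gen_eq_iff (u : Fin L → ℝ) (y : Fin L → Bool) :
    genAux D u L = y ↔ ∀ j : Fin L, (y j = true ↔ u j ≤ condProb D j y) := by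
  constructor
  · rintro rfl j
    by_cases hc : u j ≤ condProb D j (genAux D u L)
    · simp [gen_apply, hc]
    · simp [gen_apply, hc]
  · intro h
    have key : ∀ k : ℕ, k ≤ L → ∀ i : Fin L, (i : ℕ) < k → genAux D u k i = y i := by
      intro k
      induction k with
      | zero => intro _ i hi; exact absurd hi (Nat.not_lt_zero _)
      | succ k ih =>
        intro hk i hi
        have hkL : k ≤ L := Nat.le_of_succ_le hk
        by_cases hik : (i : ℕ) = k
        · show (if (i : ℕ) = k then
              (if u i ≤ condProb D i (genAux D u k) then true else false) else _) = y i
          rw [if_pos hik]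
          have hcp : condProb D i (genAux D u k) = condProb D i y :=
            condProb_congr D i fun i' hi' => ih hkL i' (by omega)
          rw [hcp]
          by_cases hu : u i ≤ condProb D i y
          · rw [if_pos hu]; exact ((h i).2 hu).symm
          · rw [if_neg hu]
            cases hy : y i
            · rfl
            · exact absurd ((h i).1 hy) hu
        · show (if (i : ℕ) = k then _ else genAux D u k i) = y i
          rw [if_neg hik]
          exact ih hkL i (by omega)
    funext i
    exact key L le_rfl i i.isLt

lemma gen_preimage (y : Fin L → Bool) :
    (fun u : Fin L → ℝ => genAux D u L) ⁻¹' {y} = Set.pi Set.univ (fun j => Iset D y j) := by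
  ext u
  simp only [Set.mem_preimage, Set.mem_singleton_iff, Set.mem_pi, Set.mem_univ, true_implies]
  rw [gen_eq_iff]
  apply forall_congr'
  intro j
  cases hy : y j
  · simp [Iset, hy, not_le]
  · simp [Iset, hy]

lemma measurable_genAux (k : ℕ) : Measurable (fun u : Fin L → ℝ => genAux D u k) := by
  induction k with
  | zero => exact measurable_const
  | succ k ih =>
    apply measurable_pi_lambda
    intro i
    by_cases hik : (i : ℕ) = k
    · have hfun : (fun u : Fin L → ℝ => genAux D u (k + 1) i) =
          fun u => if u i ≤ condProb D i (genAux D u k) then true else false := by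
        funext u
        show (if (i : ℕ) = k then _ else _) = _
        rw [if_pos hik]
      rw [hfun]
      have hcp : Measurable (fun u : Fin L → ℝ => condProb D i (genAux D u k)) :=
        (measurable_of_countable (condProb D i)).comp ih
      exact Measurable.ite (measurableSet_le (measurable_pi_apply i) hcp)
        measurable_const measurable_const
    · have hfun : (fun u : Fin L → ℝ => genAux D u (k + 1) i) =
          fun u => genAux D u k i := by
        funext u
        show (if (i : ℕ) = k then _ else _) = _
        rw [if_neg hik]
      rw [hfun]
      exact (measurable_pi_apply i).comp ih

noncomputable def mu0 : Measure ℝ := volume.restrict (Set.Icc (0:ℝ) 1)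

instance : IsProbabilityMeasure (mu0) := by
  constructor
  rw [mu0, Measure.restrict_apply_univ]
  simp [Real.volume_Icc]

lemma mu0_Iic {q : ℝ} (hq0 : 0 ≤ q) (hq1 : q ≤ 1) :
    mu0 (Set.Iic q) = ENNReal.ofReal q := by
  rw [mu0, Measure.restrict_apply measurableSet_Iic]
  have h : Set.Iic q ∩ Set.Icc 0 1 = Set.Icc 0 q := by
    ext x
    simp only [Set.mem_inter_iff, Set.mem_Iic, Set.mem_Icc]
    constructor
    · rintro ⟨h1, h2, h3⟩; exact ⟨h2, h1⟩
    · rintro ⟨h1, h2⟩; exact ⟨h2, h1, le_trans h2 hq1⟩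
  rw [h, Real.volume_Icc, sub_zero]

lemma mu0_Ioi {q : ℝ} (hq0 : 0 ≤ q) :
    mu0 (Set.Ioi q) = ENNReal.ofReal (1 - q) := by
  rw [mu0, Measure.restrict_apply measurableSet_Ioi]
  have h : Set.Ioi q ∩ Set.Icc 0 1 = Set.Ioc q 1 := by
    ext x
    simp only [Set.mem_inter_iff, Set.mem_Ioi, Set.mem_Icc, Set.mem_Ioc]
    constructor
    · rintro ⟨h1, h2, h3⟩; exact ⟨h1, h3⟩
    · rintro ⟨h1, h2⟩; exact ⟨h1, le_trans hq0 (le_of_lt h1), h2⟩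
  rw [h, Real.volume_Ioc]

lemma hasDerivAt_xlogx {x : ℝ} (hx : x ≠ 0) :
    HasDerivAt (fun x : ℝ => x - x * Real.log x) (-Real.log x) x := by
  have h1 := Real.hasDerivAt_mul_log hx
  have h2 := (hasDerivAt_id x).sub h1
  exact h2.congr_deriv (by ring)

lemma integrableOn_neg_log_Ioc : IntegrableOn (fun x => -Real.log x) (Set.Ioc (0:ℝ) 1) volume := by
  apply intervalIntegral.integrableOn_deriv_of_nonneg
    (g := fun x : ℝ => x - x * Real.log x)
  · exact (continuous_id.sub Real.continuous_mul_log).continuousOn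
  · exact fun x hx => hasDerivAt_xlogx (ne_of_gt hx.1)
  · exact fun x hx => neg_nonneg.2 (Real.log_nonpos hx.1.le hx.2.le)

lemma integral_neg_log {q : ℝ} (hq0 : 0 ≤ q) (hq1 : q ≤ 1) :
    ∫ x in Set.Ioc (0:ℝ) q, -Real.log x = q - q * Real.log q := by
  rcases eq_or_lt_of_le hq0 with h | h
  · rw [← h]; simp
  · have hint : IntervalIntegrable (fun x => -Real.log x) volume 0 q := by
      rw [intervalIntegrable_iff_integrableOn_Ioc_of_le (le_of_lt h)]
      exact integrableOn_neg_log_Ioc.mono_set (Set.Ioc_subset_Ioc_right hq1)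
    have hftc := intervalIntegral.integral_eq_sub_of_hasDeriv_right_of_le (le_of_lt h)
      (f := fun x : ℝ => x - x * Real.log x) (f' := fun x => -Real.log x)
      ((continuous_id.sub Real.continuous_mul_log).continuousOn)
      (fun x hx => (hasDerivAt_xlogx (ne_of_gt hx.1)).hasDerivWithinAt)
      hint
    rw [intervalIntegral.integral_of_le (le_of_lt h)] at hftc
    rw [hftc]
    simp

lemma hasDerivAt_1mxlog {x : ℝ} (hx : x < 1) :
    HasDerivAt (fun x : ℝ => (1 - x) * Real.log (1 - x) + x) (-Real.log (1 - x)) x := by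
  have h0 : (1 : ℝ) - x ≠ 0 := by intro h; nlinarith [h]
  have h1 : HasDerivAt (fun y : ℝ => y * Real.log y) (Real.log (1 - x) + 1) (1 - x) :=
    Real.hasDerivAt_mul_log h0
  have h2 : HasDerivAt (fun x : ℝ => 1 - x) (-1) x := by
    simpa using (hasDerivAt_id x).const_sub 1
  have h3 := (h1.comp x h2).add (hasDerivAt_id x)
  exact h3.congr_deriv (by ring)

lemma integrableOn_neg_log1m_Ioc {q : ℝ} (hq0 : 0 ≤ q) :
    IntegrableOn (fun x => -Real.log (1 - x)) (Set.Ioc q 1) volume := by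
  apply intervalIntegral.integrableOn_deriv_of_nonneg
    (g := fun x : ℝ => (1 - x) * Real.log (1 - x) + x)
  · exact ((Real.continuous_mul_log.comp (continuous_const.sub continuous_id)).add
      continuous_id).continuousOn
  · exact fun x hx => hasDerivAt_1mxlog hx.2
  · intro x hx
    refine neg_nonneg.2 (Real.log_nonpos (by linarith [hx.2]) (by linarith [hx.1, hq0]))

lemma integral_neg_log1m {q : ℝ} (hq0 : 0 ≤ q) (hq1 : q ≤ 1) :
    ∫ x in Set.Ioc q 1, -Real.log (1 - x) = (1 - q) - (1 - q) * Real.log (1 - q) := by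
  rcases eq_or_lt_of_le hq1 with h | h
  · rw [h]; simp
  · have hint : IntervalIntegrable (fun x => -Real.log (1 - x)) volume q 1 := by
      rw [intervalIntegrable_iff_integrableOn_Ioc_of_le (le_of_lt h)]
      exact integrableOn_neg_log1m_Ioc hq0
    have hftc := intervalIntegral.integral_eq_sub_of_hasDeriv_right_of_le (le_of_lt h)
      (f := fun x : ℝ => (1 - x) * Real.log (1 - x) + x) (f' := fun x => -Real.log (1 - x))
      (((Real.continuous_mul_log.comp (continuous_const.sub continuous_id)).add
        continuous_id).continuousOn)
      (fun x hx => (hasDerivAt_1mxlog hx.2).hasDerivWithinAt)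
      hint
    rw [intervalIntegral.integral_of_le (le_of_lt h)] at hftc
    rw [hftc]
    simp
    ring


lemma integrable_pi_prod {μ : Measure ℝ} [SigmaFinite μ] :
    ∀ {n : ℕ} (f : Fin n → ℝ → ℝ), (∀ i, Integrable (f i) μ) →
      Integrable (fun x : Fin n → ℝ => ∏ i, f i (x i)) (Measure.pi fun _ => μ) := by
  intro n
  induction n with
  | zero =>
    intro f _
    haveI : IsProbabilityMeasure (Measure.pi fun _ : Fin 0 => μ) :=
      ⟨by rw [Measure.pi_univ]; simp⟩
    simpa using integrable_const (1 : ℝ)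
  | succ n ih =>
    intro f hf
    have A := ((measurePreserving_piFinSuccAbove (fun _ : Fin (n + 1) => μ) 0).symm)
    rw [← A.integrable_comp_emb (MeasurableEquiv.measurableEmbedding _)]
    simp_rw [MeasurableEquiv.piFinSuccAbove_symm_apply, Fin.insertNthEquiv,
      Fin.prod_univ_succ, Fin.insertNth_zero]
    simp only [Fin.zero_succAbove, Function.comp_def, Fin.cons_zero, Fin.cons_succ,
      Equiv.coe_fn_mk]
    exact Integrable.mul_prod (hf 0) (ih (fun i => f i.succ) (fun i => hf _))

lemma integral_pi_prod {μ : Measure ℝ} [SigmaFinite μ] :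
    ∀ {n : ℕ} (f : Fin n → ℝ → ℝ),
      (∫ x : Fin n → ℝ, ∏ i, f i (x i) ∂(Measure.pi fun _ => μ)) = ∏ i, ∫ x, f i x ∂μ := by
  intro n
  induction n with
  | zero =>
    intro f
    simp only [Finset.univ_eq_empty, Finset.prod_empty, integral_const, measureReal_def, pi_empty_univ,
      ENNReal.toReal_one, smul_eq_mul, mul_one, one_smul]
  | succ n ih =>
    intro f
    calc
      _ = ∫ x : ℝ × (Fin n → ℝ),
          f 0 x.1 * ∏ i : Fin n, f i.succ (x.2 i) ∂((μ).prod (Measure.pi fun _ => μ)) := by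
        rw [← ((measurePreserving_piFinSuccAbove
          (fun _ : Fin (n + 1) => μ) 0).symm).integral_comp']
        refine integral_congr_ae (Filter.Eventually.of_forall fun x => ?_)
        simp [Fin.prod_univ_succ, MeasurableEquiv.piFinSuccAbove_symm_apply,
          Fin.insertNthEquiv, Fin.insertNth_zero, Fin.zero_succAbove]
      _ = (∫ x, f 0 x ∂μ) * ∏ i : Fin n, ∫ x, f i.succ x ∂μ := by
        rw [← ih (fun i => f i.succ), ← integral_prod_mul]
      _ = ∏ i, ∫ x, f i x ∂μ := by rw [Fin.prod_univ_succ]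

lemma sum_prod_log {n : ℕ} (m : Fin n → ℝ) (hm : ∀ i, 0 ≤ m i) :
    ∑ j : Fin n, (∏ i ∈ Finset.univ.erase j, m i) * (m j * Real.log (m j)) =
      (∏ i, m i) * Real.log (∏ i, m i) := by
  by_cases h : ∀ i, m i ≠ 0
  · have hlog : Real.log (∏ i, m i) = ∑ i, Real.log (m i) :=
      Real.log_prod (fun i _ => h i)
    rw [hlog, Finset.mul_sum]
    refine Finset.sum_congr rfl fun j _ => ?_
    have := Finset.mul_prod_erase Finset.univ m (Finset.mem_univ j)
    calc (∏ i ∈ Finset.univ.erase j, m i) * (m j * Real.log (m j))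
        = (m j * ∏ i ∈ Finset.univ.erase j, m i) * Real.log (m j) := by ring
      _ = (∏ i, m i) * Real.log (m j) := by rw [this]
  · push_neg at h
    obtain ⟨i₀, hi₀⟩ := h
    have hprod : (∏ i, m i) = 0 := Finset.prod_eq_zero (Finset.mem_univ i₀) hi₀
    rw [hprod]
    rw [Finset.sum_eq_zero]
    · simp
    · intro j _
      by_cases hj : j = i₀
      · rw [hj, hi₀]; simp
      · have : (∏ i ∈ Finset.univ.erase j, m i) = 0 :=
          Finset.prod_eq_zero (Finset.mem_erase.2 ⟨fun hc => hj hc.symm, Finset.mem_univ i₀⟩) hi₀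
        rw [this, zero_mul]

lemma inter_Iic {q : ℝ} (hq1 : q ≤ 1) : Set.Iic q ∩ Set.Icc 0 1 = Set.Icc 0 q := by
  ext x
  simp only [Set.mem_inter_iff, Set.mem_Iic, Set.mem_Icc]
  exact ⟨fun ⟨h1, h2, _⟩ => ⟨h2, h1⟩, fun ⟨h1, h2⟩ => ⟨h2, h1, le_trans h2 hq1⟩⟩

lemma inter_Ioi {q : ℝ} (hq0 : 0 ≤ q) : Set.Ioi q ∩ Set.Icc 0 1 = Set.Ioc q 1 := by
  ext x
  simp only [Set.mem_inter_iff, Set.mem_Ioi, Set.mem_Icc, Set.mem_Ioc]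
  exact ⟨fun ⟨h1, _, h3⟩ => ⟨h1, h3⟩, fun ⟨h1, h2⟩ => ⟨h1, le_trans hq0 (le_of_lt h1), h2⟩⟩

lemma measurableSet_Iset (y : Fin L → Bool) (j : Fin L) : MeasurableSet (Iset D y j) := by
  unfold Iset; split
  · exact measurableSet_Iic
  · exact measurableSet_Ioi

lemma measure_Iset (y : Fin L → Bool) (j : Fin L) :
    mu0 (Iset D y j) = ENNReal.ofReal (mBit D y j) := by
  unfold Iset mBit
  cases hy : y j
  · rw [if_neg (by simp), if_neg (by simp)]
    rw [mu0, Measure.restrict_apply measurableSet_Ioi, inter_Ioi (condProb_nonneg D j y),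
      Real.volume_Ioc]
  · rw [if_pos rfl, if_pos rfl]
    rw [mu0, Measure.restrict_apply measurableSet_Iic, inter_Iic (condProb_le_one D j y),
      Real.volume_Icc, sub_zero]

lemma map_gen_eq :
    (Measure.pi fun _ : Fin L => mu0).map (fun u => genAux D u L) = D.toMeasure := by
  apply Measure.ext_of_singleton
  intro y
  rw [Measure.map_apply (measurable_genAux D L) (measurableSet_singleton y),
    gen_preimage D y, Measure.pi_pi,
    PMF.toMeasure_apply_singleton _ _ (measurableSet_singleton y)]
  calc ∏ i, mu0 (Iset D y i) = ∏ i, ENNReal.ofReal (mBit D y i) :=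
        Finset.prod_congr rfl fun i _ => measure_Iset D y i
    _ = ENNReal.ofReal (∏ i, mBit D y i) :=
        (ENNReal.ofReal_prod_of_nonneg (fun i _ => mBit_nonneg D y i)).symm
    _ = ENNReal.ofReal ((D y).toReal) := by rw [prod_mBit]
    _ = D y := ENNReal.ofReal_toReal (D.apply_ne_top y)

noncomputable def gfun (y : Fin L → Bool) (j i : Fin L) : ℝ → ℝ :=
  Set.indicator (Iset D y i)
    (fun t => if i = j then (if y i then Real.log (1/t) else Real.log (1/(1-t))) else 1)

lemma gfun_ne {y : Fin L → Bool} {j i : Fin L} (hij : i ≠ j) :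
    gfun D y j i = Set.indicator (Iset D y i) (fun _ => (1:ℝ)) := by
  unfold gfun
  rw [show (fun t : ℝ => if i = j then (if y i then Real.log (1/t) else Real.log (1/(1-t))) else 1)
      = (fun _ : ℝ => (1:ℝ)) from funext fun t => if_neg hij]

lemma integrable_gfun (y : Fin L → Bool) (j i : Fin L) : Integrable (gfun D y j i) mu0 := by
  by_cases hij : i = j
  · subst hij
    unfold gfun
    rw [integrable_indicator_iff (measurableSet_Iset D y i)]
    unfold IntegrableOn
    rw [mu0, Measure.restrict_restrict (measurableSet_Iset D y i)]
    unfold Iset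
    cases hy : y i
    · rw [if_neg (by simp), inter_Ioi (condProb_nonneg D i y)]
      have hfun : (fun t : ℝ => if i = i then (if (false : Bool) = true then Real.log (1/t) else Real.log (1/(1-t))) else 1)
          = fun t => -Real.log (1 - t) := by
        funext t
        rw [if_pos rfl, if_neg (by simp), one_div, Real.log_inv]
      rw [hfun]
      exact integrableOn_neg_log1m_Ioc (condProb_nonneg D i y)
    · rw [if_pos rfl, inter_Iic (condProb_le_one D i y)]
      have hfun : (fun t : ℝ => if i = i then (if (true : Bool) = true then Real.log (1/t) else Real.log (1/(1-t))) else 1)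
          = fun t => -Real.log t := by
        funext t
        rw [if_pos rfl, if_pos rfl, one_div, Real.log_inv]
      rw [hfun]
      rw [show Integrable (fun t : ℝ => -Real.log t) (volume.restrict (Set.Icc 0 (condProb D i y)))
        = IntegrableOn (fun t : ℝ => -Real.log t) (Set.Icc 0 (condProb D i y)) volume from rfl,
        integrableOn_Icc_iff_integrableOn_Ioc]
      exact integrableOn_neg_log_Ioc.mono_set (Set.Ioc_subset_Ioc_right (condProb_le_one D i y))
  · rw [gfun_ne D hij]
    exact (integrable_const 1).indicator (measurableSet_Iset D y i)

lemma integral_gfun_eq (y : Fin L → Bool) (j : Fin L) :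
    ∫ t, gfun D y j j t ∂mu0 = mBit D y j - mBit D y j * Real.log (mBit D y j) := by
  unfold gfun
  rw [integral_indicator (measurableSet_Iset D y j)]
  rw [mu0, Measure.restrict_restrict (measurableSet_Iset D y j)]
  unfold Iset mBit
  cases hy : y j
  · rw [if_neg (by simp), if_neg (by simp), inter_Ioi (condProb_nonneg D j y)]
    have hfun : (fun t : ℝ => if j = j then (if (false : Bool) = true then Real.log (1/t) else Real.log (1/(1-t))) else 1)
        = fun t => -Real.log (1 - t) := by
      funext t; rw [if_pos rfl, if_neg (by simp), one_div, Real.log_inv]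
    rw [hfun]
    exact integral_neg_log1m (condProb_nonneg D j y) (condProb_le_one D j y)
  · rw [if_pos rfl, if_pos rfl, inter_Iic (condProb_le_one D j y)]
    have hfun : (fun t : ℝ => if j = j then (if (true : Bool) = true then Real.log (1/t) else Real.log (1/(1-t))) else 1)
        = fun t => -Real.log t := by
      funext t; rw [if_pos rfl, if_pos rfl, one_div, Real.log_inv]
    rw [hfun, MeasureTheory.integral_Icc_eq_integral_Ioc]
    exact integral_neg_log (condProb_nonneg D j y) (condProb_le_one D j y)

lemma integral_gfun_ne (y : Fin L → Bool) {j i : Fin L} (hij : i ≠ j) :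
    ∫ t, gfun D y j i t ∂mu0 = mBit D y i := by
  rw [gfun_ne D hij, MeasureTheory.integral_indicator_const (1:ℝ) (measurableSet_Iset D y i),
    measureReal_def, measure_Iset D y i, ENNReal.toReal_ofReal (mBit_nonneg D y i), smul_eq_mul, mul_one]

lemma score_main (y : Fin L → Bool) :
    ∑ j : Fin L, ∏ i : Fin L, (∫ t, gfun D y j i t ∂mu0)
      = (L : ℝ) * (D y).toReal - (D y).toReal * Real.log ((D y).toReal) := by
  have hval : ∀ j : Fin L, ∏ i : Fin L, (∫ t, gfun D y j i t ∂mu0)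
      = (∏ i, mBit D y i) - (∏ i ∈ Finset.univ.erase j, mBit D y i) * (mBit D y j * Real.log (mBit D y j)) := by
    intro j
    rw [← Finset.mul_prod_erase Finset.univ _ (Finset.mem_univ j)]
    rw [integral_gfun_eq D y j]
    rw [Finset.prod_congr rfl fun i hi => integral_gfun_ne D y (Finset.mem_erase.1 hi).1]
    rw [← Finset.mul_prod_erase Finset.univ (mBit D y) (Finset.mem_univ j)]
    ring
  rw [Finset.sum_congr rfl fun j _ => hval j]
  rw [Finset.sum_sub_distrib, Finset.sum_const, Finset.card_univ, Fintype.card_fin,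
    sum_prod_log (mBit D y) (mBit_nonneg D y), prod_mBit, nsmul_eq_mul]

lemma integral_score :
    (∫ u : Fin L → ℝ, ∑ j, (if genAux D u L j then Real.log (1 / u j)
        else Real.log (1 / (1 - u j))) ∂(Measure.pi fun _ : Fin L => mu0))
      = (L : ℝ) + ∑ y : Fin L → Bool, -((D y).toReal * Real.log ((D y).toReal)) := by
  have hu_mem : ∀ u : Fin L → ℝ, ∀ i, u i ∈ Iset D (genAux D u L) i := by
    intro u
    have h0 : u ∈ (fun u : Fin L → ℝ => genAux D u L) ⁻¹' {genAux D u L} := rfl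
    rw [gen_preimage] at h0
    exact fun i => h0 i (Set.mem_univ i)
  have hFrep : ∀ u : Fin L → ℝ,
      ∑ j, (if genAux D u L j then Real.log (1 / u j) else Real.log (1 / (1 - u j)))
        = ∑ y : Fin L → Bool, ∑ j, ∏ i, gfun D y j i (u i) := by
    intro u
    have h1 : ∑ y : Fin L → Bool, ∑ j, ∏ i, gfun D y j i (u i)
        = ∑ j, ∏ i, gfun D (genAux D u L) j i (u i) := by
      apply Finset.sum_eq_single
      · intro y _ hy
        have hmem : ¬ ∀ i, u i ∈ Iset D y i := by
          intro hall
          have h2 : u ∈ Set.pi Set.univ (fun j => Iset D y j) := fun i _ => hall i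
          rw [← gen_preimage D y] at h2
          exact hy h2.symm
        push_neg at hmem
        obtain ⟨i₀, hi₀⟩ := hmem
        exact Finset.sum_eq_zero fun j _ =>
          Finset.prod_eq_zero (Finset.mem_univ i₀) (Set.indicator_of_notMem hi₀ _)
      · intro h; exact absurd (Finset.mem_univ _) h
    rw [h1]
    refine Finset.sum_congr rfl fun j _ => ?_
    rw [Finset.prod_eq_single j ?_ ?_]
    · unfold gfun
      rw [Set.indicator_of_mem (hu_mem u j), if_pos rfl]
    · intro i _ hij
      unfold gfun
      rw [Set.indicator_of_mem (hu_mem u i), if_neg hij]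
    · intro h; exact absurd (Finset.mem_univ _) h
  rw [show (fun u : Fin L → ℝ => ∑ j, (if genAux D u L j then Real.log (1 / u j)
      else Real.log (1 / (1 - u j)))) = fun u => ∑ y : Fin L → Bool, ∑ j, ∏ i, gfun D y j i (u i)
      from funext hFrep]
  rw [integral_finset_sum _ (fun y _ => integrable_finset_sum _
    (fun j _ => integrable_pi_prod _ (fun i => integrable_gfun D y j i)))]
  have hy : ∀ y : Fin L → Bool,
      (∫ u : Fin L → ℝ, ∑ j, ∏ i, gfun D y j i (u i) ∂(Measure.pi fun _ : Fin L => mu0))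
        = (L : ℝ) * (D y).toReal - (D y).toReal * Real.log ((D y).toReal) := by
    intro y
    rw [integral_finset_sum _ (fun j _ => integrable_pi_prod _ (fun i => integrable_gfun D y j i))]
    rw [Finset.sum_congr rfl (fun j _ => integral_pi_prod (fun i => gfun D y j i))]
    exact score_main D y
  rw [Finset.sum_congr rfl fun y _ => hy y]
  rw [Finset.sum_sub_distrib, ← Finset.mul_sum, sum_toReal_eq_one, mul_one, sub_eq_add_neg,
    ← Finset.sum_neg_distrib]


end Watermark


/-- Thresholding i.i.d. uniforms against the model's conditional probabilities
produces a string `X` distributed exactly according to `D`, while the expected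
detection score `E[∑_j s(X_j, U_j)]`, with `s(1,u) = ln(1/u)` and
`s(0,u) = ln(1/(1−u))`, equals `L + ln(2)·H(D)` where `H(D)` is the Shannon
entropy (base 2) of `D`. -/

theorem watermarked_text_distribution_and_score
    {Ω : Type*} [MeasurableSpace Ω] (μ : Measure Ω) [IsProbabilityMeasure μ]
    (L : ℕ) (hL : 1 ≤ L) (D : PMF (Fin L → Bool))
    (U : Fin L → Ω → ℝ) (hmeas : ∀ j, Measurable (U j))
    (hindep : iIndepFun U μ)
    (hunif : ∀ j, μ.map (U j) = volume.restrict (Set.Icc (0 : ℝ) 1)) :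
    μ.map (fun ω => genAux D (fun j => U j ω) L) = D.toMeasure ∧
    (∫ ω, ∑ j, (if genAux D (fun j' => U j' ω) L j
          then Real.log (1 / U j ω) else Real.log (1 / (1 - U j ω))) ∂μ)
      = (L : ℝ) + Real.log 2 *
          (∑ y : Fin L → Bool, -((D y).toReal * Real.logb 2 (D y).toReal)) := by
  have hmeasPi : Measurable (fun ω (j : Fin L) => U j ω) :=
    measurable_pi_lambda _ hmeas
  have h_pi : μ.map (fun ω (j : Fin L) => U j ω)
      = Measure.pi (fun _ : Fin L => Watermark.mu0) := by
    symm
    apply MeasureTheory.Measure.pi_eq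
    intro s hs
    rw [Measure.map_apply hmeasPi (MeasurableSet.univ_pi hs)]
    have hpre : (fun ω (j : Fin L) => U j ω) ⁻¹' (Set.pi Set.univ s)
        = ⋂ i ∈ Finset.univ, U i ⁻¹' s i := by
      ext ω; simp [Set.mem_pi]
    rw [hpre, hindep.measure_inter_preimage_eq_mul Finset.univ (fun i _ => hs i)]
    refine Finset.prod_congr rfl fun i _ => ?_
    rw [← Measure.map_apply (hmeas i) (hs i), hunif i]
    rfl
  constructor
  · have hcomp : (fun ω => genAux D (fun j => U j ω) L)
        = (fun u => genAux D u L) ∘ (fun ω (j : Fin L) => U j ω) := rfl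
    rw [hcomp, ← Measure.map_map (Watermark.measurable_genAux D L) hmeasPi, h_pi,
      Watermark.map_gen_eq]
  · have hF_meas : Measurable (fun u : Fin L → ℝ => ∑ j, (if genAux D u L j
        then Real.log (1 / u j) else Real.log (1 / (1 - u j)))) := by
      apply Finset.measurable_sum
      intro j _
      have hset : MeasurableSet {u : Fin L → ℝ | genAux D u L j = true} :=
        ((measurable_pi_apply j).comp (Watermark.measurable_genAux D L))
          (measurableSet_singleton true)
      exact Measurable.ite hset
        (Real.measurable_log.comp (measurable_const.div (measurable_pi_apply j)))
        (Real.measurable_log.comp (measurable_const.div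
          (measurable_const.sub (measurable_pi_apply j))))
    have hrw : (∫ ω, ∑ j, (if genAux D (fun j' => U j' ω) L j
          then Real.log (1 / U j ω) else Real.log (1 / (1 - U j ω))) ∂μ)
        = ∫ u : Fin L → ℝ, ∑ j, (if genAux D u L j then Real.log (1 / u j)
          else Real.log (1 / (1 - u j))) ∂(Measure.pi fun _ : Fin L => Watermark.mu0) := by
      rw [← h_pi, integral_map hmeasPi.aemeasurable hF_meas.aestronglyMeasurable]
    rw [hrw, Watermark.integral_score D]
    congr 1
    rw [Finset.mul_sum]
    refine Finset.sum_congr rfl fun y _ => ?_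
    have h2 : Real.log 2 ≠ 0 := ne_of_gt (Real.log_pos one_lt_two)
    rw [Real.logb]
    field_simp
end
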